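/- Let A = ℂ₋₁[x,y] be the quotient of the free associative ℂ-algebra on generators x, y by the two-sided ideal generated by xy + yx, and let x̄, ȳ denote the images of x, y in A. Then the center of A equals the ℂ-subalgebra of A generated by x̄² and ȳ². -/

import Mathlib

/-- The defining relation xy + yx = 0 of the skew polynomial ring ℂ₋₁[x,y],
on generators x = ι 0, y = ι 1 of the free algebra. -/
inductive SkewRel : FreeAlgebra ℂ (Fin 2) → FreeAlgebra ℂ (Fin 2) → Prop
  | rel : SkewRel
      (FreeAlgebra.ι ℂ (0 : Fin 2) * FreeAlgebra.ι ℂ (1 : Fin 2) +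
       FreeAlgebra.ι ℂ (1 : Fin 2) * FreeAlgebra.ι ℂ (0 : Fin 2)) 0

/-- The skew polynomial ring ℂ₋₁[x,y] = ℂ⟨x,y⟩/(xy + yx). -/
abbrev SkewPoly := RingQuot SkewRel

noncomputable section SkewAux

open MvPolynomial

namespace SkewAux

abbrev R2 := MvPolynomial (Fin 2) ℂ

def Xg : SkewPoly := RingQuot.mkAlgHom ℂ SkewRel (FreeAlgebra.ι ℂ (0 : Fin 2))
def Yg : SkewPoly := RingQuot.mkAlgHom ℂ SkewRel (FreeAlgebra.ι ℂ (1 : Fin 2))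

lemma rel0 : Xg * Yg + Yg * Xg = 0 := by
  rw [Xg, Yg, ← map_mul, ← map_mul, ← map_add, RingQuot.mkAlgHom_rel ℂ SkewRel.rel, map_zero]

lemma yx : Yg * Xg = -(Xg * Yg) := eq_neg_of_add_eq_zero_right rel0

lemma mem_of (S : Subalgebra ℂ SkewPoly) (hX : Xg ∈ S) (hY : Yg ∈ S) (z : SkewPoly) :
    z ∈ S := by
  obtain ⟨w, rfl⟩ := RingQuot.mkAlgHom_surjective ℂ SkewRel z
  induction w using FreeAlgebra.induction with
  | grade0 c => rw [AlgHom.commutes]; exact S.algebraMap_mem c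
  | grade1 i =>
      fin_cases i
      · exact hX
      · exact hY
  | mul a b ha hb => rw [map_mul]; exact S.mul_mem ha hb
  | add a b ha hb => rw [map_add]; exact S.add_mem ha hb

lemma y_x_pow (a : ℕ) : Yg * Xg ^ a = ((-1 : ℂ) ^ a) • (Xg ^ a * Yg) := by
  induction a with
  | zero => simp
  | succ a ih =>
      rw [pow_succ, ← mul_assoc, ih, smul_mul_assoc, mul_assoc, yx, pow_succ]
      rw [mul_neg (Xg ^ a), smul_neg, ← mul_assoc, ← neg_smul]
      congr 1
      ring_nf

lemma y_pow_x (b : ℕ) : Yg ^ b * Xg = ((-1 : ℂ) ^ b) • (Xg * Yg ^ b) := by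
  induction b with
  | zero => simp
  | succ b ih =>
      rw [pow_succ, mul_assoc, yx, mul_neg (Yg ^ b), ← mul_assoc, ih, smul_mul_assoc,
        mul_assoc, ← pow_succ, pow_succ (-1 : ℂ) b, mul_neg_one]
      exact (neg_smul ((-1 : ℂ) ^ b) (Xg * Yg ^ (b + 1))).symm

lemma y_pow_x_pow (b a : ℕ) :
    Yg ^ b * Xg ^ a = ((-1 : ℂ) ^ (b * a)) • (Xg ^ a * Yg ^ b) := by
  induction a with
  | zero => simp
  | succ a ih =>
      rw [pow_succ, ← mul_assoc, ih, smul_mul_assoc, mul_assoc, y_pow_x, mul_smul_comm,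
        smul_smul, ← pow_add, ← mul_assoc, ← pow_succ]
      congr 1

def m (p : ℕ × ℕ) : SkewPoly := Xg ^ p.1 * Yg ^ p.2

lemma m_mul (p q : ℕ × ℕ) :
    m p * m q = ((-1 : ℂ) ^ (p.2 * q.1)) • m (p.1 + q.1, p.2 + q.2) := by
  simp only [m]
  rw [mul_assoc, ← mul_assoc (Yg ^ p.2), y_pow_x_pow, smul_mul_assoc, mul_smul_comm]
  rw [mul_assoc, ← pow_add, ← mul_assoc, ← pow_add]

lemma span_eq_top (z : SkewPoly) : z ∈ Submodule.span ℂ (Set.range m) := by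
  set T := Submodule.span ℂ (Set.range m) with hT
  have hmem : ∀ p, m p ∈ T := fun p => Submodule.subset_span ⟨p, rfl⟩
  have hmul : ∀ u ∈ T, ∀ v ∈ T, u * v ∈ T := by
    intro u hu v hv
    refine Submodule.span_induction ?_ ?_ ?_ ?_ hu
    · rintro _ ⟨p, rfl⟩
      refine Submodule.span_induction ?_ ?_ ?_ ?_ hv
      · rintro _ ⟨q, rfl⟩
        rw [m_mul]
        exact T.smul_mem _ (hmem _)
      · simp
      · intro a b _ _ ha hb; rw [mul_add]; exact T.add_mem ha hb
      · intro c a _ ha; rw [mul_smul_comm]; exact T.smul_mem _ ha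
    · simp
    · intro a b _ _ ha hb; rw [add_mul]; exact T.add_mem ha hb
    · intro c a _ ha; rw [smul_mul_assoc]; exact T.smul_mem _ ha
  let S : Subalgebra ℂ SkewPoly :=
    { carrier := T
      mul_mem' := fun ha hb => hmul _ ha _ hb
      one_mem' := by simpa [m] using hmem (0, 0)
      add_mem' := fun ha hb => T.add_mem ha hb
      zero_mem' := T.zero_mem
      algebraMap_mem' := by
        intro c
        have : (algebraMap ℂ SkewPoly c) = c • (1 : SkewPoly) := (Algebra.algebraMap_eq_smul_one c)
        rw [this]
        exact T.smul_mem _ (by simpa [m] using hmem (0, 0)) }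
  have hX : Xg ∈ S := by simpa [S, m] using hmem (1, 0)
  have hY : Yg ∈ S := by simpa [S, m] using hmem (0, 1)
  exact mem_of S hX hY z

/-! ### Matrix representation -/

def Mx : Matrix (Fin 2) (Fin 2) R2 := !![0, (X 0) ^ 2; 1, 0]
def My : Matrix (Fin 2) (Fin 2) R2 := !![X 1, 0; 0, -X 1]

lemma mx_mul_my : Mx * My + My * Mx = 0 := by
  ext i j
  fin_cases i <;> fin_cases j <;>
    simp [Mx, My, Matrix.mul_apply, Fin.sum_univ_two] <;> ring

lemma mx_sq : Mx * Mx = ((X 0 : R2) ^ 2) • (1 : Matrix (Fin 2) (Fin 2) R2) := by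
  ext i j
  fin_cases i <;> fin_cases j <;>
    simp [Mx, Matrix.mul_apply, Fin.sum_univ_two, Matrix.one_apply]

lemma mx_pow_even (k : ℕ) :
    Mx ^ (2 * k) = ((X 0 : R2) ^ (2 * k)) • (1 : Matrix (Fin 2) (Fin 2) R2) := by
  induction k with
  | zero => simp
  | succ k ih =>
      have : 2 * (k + 1) = 2 * k + 2 := by ring
      rw [this, pow_add, ih, pow_two, mx_sq, smul_mul_assoc, mul_smul_comm, smul_smul,
        one_mul, pow_add]

lemma mx_pow_odd (k : ℕ) :
    Mx ^ (2 * k + 1) = ((X 0 : R2) ^ (2 * k)) • Mx := by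
  rw [pow_succ, mx_pow_even, smul_mul_assoc, one_mul]

lemma my_pow (b : ℕ) : My ^ b = !![(X 1 : R2) ^ b, 0; 0, (-X 1) ^ b] := by
  induction b with
  | zero =>
      ext i j
      fin_cases i <;> fin_cases j <;> simp [Matrix.one_apply]
  | succ b ih =>
      rw [pow_succ, ih]
      ext i j
      fin_cases i <;> fin_cases j <;>
        simp [My, Matrix.mul_apply, Fin.sum_univ_two, pow_succ]

def f2 : Fin 2 → Matrix (Fin 2) (Fin 2) R2 := ![Mx, My]

def φ : SkewPoly →ₐ[ℂ] Matrix (Fin 2) (Fin 2) R2 :=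
  RingQuot.liftAlgHom ℂ ⟨FreeAlgebra.lift ℂ f2, by
    rintro _ _ ⟨⟩
    simp only [map_add, map_mul, map_zero, FreeAlgebra.lift_ι_apply]
    simpa [f2] using mx_mul_my⟩

lemma φ_X : φ Xg = Mx := by
  rw [Xg, φ, RingQuot.liftAlgHom_mkAlgHom_apply, FreeAlgebra.lift_ι_apply]
  simp [f2]

lemma φ_Y : φ Yg = My := by
  rw [Yg, φ, RingQuot.liftAlgHom_mkAlgHom_apply, FreeAlgebra.lift_ι_apply]
  simp [f2]

lemma φ_m (p : ℕ × ℕ) : φ (m p) = Mx ^ p.1 * My ^ p.2 := by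
  rw [m, map_mul, map_pow, map_pow, φ_X, φ_Y]

/-! ### Dual functionals -/

def E (a b : ℕ) : Fin 2 →₀ ℕ := Finsupp.single 0 a + Finsupp.single 1 b

lemma E_eq_iff {a b c d : ℕ} : E a b = E c d ↔ a = c ∧ b = d := by
  constructor
  · intro h
    have h0 := DFunLike.congr_fun h (0 : Fin 2)
    have h1 := DFunLike.congr_fun h (1 : Fin 2)
    simp [E, Finsupp.single_apply] at h0 h1
    exact ⟨h0, h1⟩
  · rintro ⟨rfl, rfl⟩; rfl

lemma coeff_ts (a b c d : ℕ) :
    MvPolynomial.coeff (E a b) ((X 0 : R2) ^ c * (X 1) ^ d) =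
      if a = c ∧ b = d then 1 else 0 := by
  rw [X_pow_eq_monomial, X_pow_eq_monomial, monomial_mul, coeff_monomial, mul_one]
  rw [show Finsupp.single (0 : Fin 2) c + Finsupp.single 1 d = E c d from rfl]
  by_cases h : a = c ∧ b = d
  · obtain ⟨rfl, rfl⟩ := h
    rw [if_pos rfl, if_pos ⟨rfl, rfl⟩]
  · rw [if_neg ?_, if_neg h]
    intro hE
    obtain ⟨h1, h2⟩ := E_eq_iff.mp hE
    exact h ⟨h1.symm, h2.symm⟩

def entryLM (i j : Fin 2) : Matrix (Fin 2) (Fin 2) R2 →ₗ[ℂ] R2 where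
  toFun M := M i j
  map_add' _ _ := rfl
  map_smul' _ _ := rfl

def coeffLM (e : Fin 2 →₀ ℕ) : R2 →ₗ[ℂ] ℂ where
  toFun q := MvPolynomial.coeff e q
  map_add' _ _ := coeff_add e _ _
  map_smul' c q := by simp [MvPolynomial.coeff_smul]

def dual (p : ℕ × ℕ) : SkewPoly →ₗ[ℂ] ℂ :=
  if Even p.1 then (coeffLM (E p.1 p.2)).comp ((entryLM 0 0).comp φ.toLinearMap)
  else (coeffLM (E (p.1 - 1) p.2)).comp ((entryLM 1 0).comp φ.toLinearMap)

lemma col0 (a b : ℕ) (i : Fin 2) :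
    (Mx ^ a * My ^ b) i 0 = (Mx ^ a) i 0 * (X 1 : R2) ^ b := by
  rw [my_pow, Matrix.mul_apply, Fin.sum_univ_two]
  simp

lemma dual_m (p q : ℕ × ℕ) : dual p (m q) = if q = p then 1 else 0 := by
  have hφ : φ (m q) = Mx ^ q.1 * My ^ q.2 := φ_m q
  by_cases hp : Even p.1
  · rw [dual, if_pos hp]
    simp only [LinearMap.comp_apply, AlgHom.toLinearMap_apply, hφ, entryLM, coeffLM,
      LinearMap.coe_mk, AddHom.coe_mk]
    change MvPolynomial.coeff _ ((Mx ^ q.1 * My ^ q.2) 0 0) = _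
    rw [col0]
    by_cases hq : Even q.1
    · obtain ⟨k, hk⟩ := hq
      have : q.1 = 2 * k := by omega
      rw [this, mx_pow_even]
      have h00 : (((X 0 : R2) ^ (2*k)) • (1 : Matrix (Fin 2) (Fin 2) R2)) 0 0
          = (X 0 : R2) ^ (2*k) := by simp [Matrix.one_apply]
      rw [h00, ← this, coeff_ts]
      by_cases hqp : q = p
      · subst hqp
        rw [if_pos ⟨rfl, rfl⟩, if_pos rfl]
      · rw [if_neg ?_, if_neg hqp]
        rintro ⟨h1, h2⟩
        exact hqp (Prod.ext h1.symm h2.symm)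
    · obtain ⟨k, hk⟩ := Nat.odd_iff.mpr (Nat.not_even_iff.mp hq)
      rw [hk, mx_pow_odd]
      have h00 : (((X 0 : R2) ^ (2*k)) • Mx) 0 0 = 0 := by simp [Mx]
      rw [h00, zero_mul, MvPolynomial.coeff_zero]
      have : ¬ q = p := by rintro rfl; exact hq hp
      rw [if_neg this]
  · rw [dual, if_neg hp]
    simp only [LinearMap.comp_apply, AlgHom.toLinearMap_apply, hφ, entryLM, coeffLM,
      LinearMap.coe_mk, AddHom.coe_mk]
    change MvPolynomial.coeff _ ((Mx ^ q.1 * My ^ q.2) 1 0) = _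
    rw [col0]
    by_cases hq : Even q.1
    · obtain ⟨k, hk⟩ := hq
      have : q.1 = 2 * k := by omega
      rw [this, mx_pow_even]
      have h10 : (((X 0 : R2) ^ (2*k)) • (1 : Matrix (Fin 2) (Fin 2) R2)) 1 0 = 0 := by
        simp [Matrix.one_apply]
      rw [h10, zero_mul, MvPolynomial.coeff_zero]
      have : ¬ q = p := by rintro rfl; exact hp ⟨k, hk⟩
      rw [if_neg this]
    · obtain ⟨k, hk⟩ := Nat.odd_iff.mpr (Nat.not_even_iff.mp hq)
      rw [hk, mx_pow_odd]
      have h10 : (((X 0 : R2) ^ (2*k)) • Mx) 1 0 = (X 0 : R2) ^ (2*k) := by simp [Mx]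
      rw [h10, coeff_ts]
      obtain ⟨j, hj⟩ := Nat.odd_iff.mpr (Nat.not_even_iff.mp hp)
      by_cases hqp : q = p
      · subst hqp
        rw [if_pos ⟨by omega, rfl⟩, if_pos rfl]
      · rw [if_neg ?_, if_neg hqp]
        rintro ⟨h1, h2⟩
        exact hqp (Prod.ext (by omega) h2.symm)
  

lemma Yg_mul_m (p : ℕ × ℕ) : Yg * m p = ((-1 : ℂ) ^ p.1) • m (p.1, p.2 + 1) := by
  rw [m, ← mul_assoc, y_x_pow, smul_mul_assoc, mul_assoc, ← pow_succ']
  rfl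

lemma m_mul_Yg (p : ℕ × ℕ) : m p * Yg = m (p.1, p.2 + 1) := by
  rw [m, mul_assoc, ← pow_succ]
  rfl

lemma Xg_mul_m (p : ℕ × ℕ) : Xg * m p = m (p.1 + 1, p.2) := by
  rw [m, ← mul_assoc, ← pow_succ']
  rfl

lemma m_mul_Xg (p : ℕ × ℕ) : m p * Xg = ((-1 : ℂ) ^ p.2) • m (p.1 + 1, p.2) := by
  rw [m, mul_assoc, y_pow_x, mul_smul_comm, ← mul_assoc, ← pow_succ]
  rfl

lemma coeff_zero_of_sum_eq (F : (ℕ × ℕ) →₀ ℂ) (g : ℕ × ℕ → ℂ) (s : ℕ × ℕ → ℕ × ℕ)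
    (hs : Function.Injective s)
    (h : (F.sum fun p c => (c * g p) • m (s p)) = 0) (p₀ : ℕ × ℕ) :
    F p₀ * g p₀ = 0 := by
  classical
  have h2 := congrArg (dual (s p₀)) h
  rw [map_finsuppSum, map_zero] at h2
  have hterm : ∀ (p : ℕ × ℕ) (c : ℂ),
      dual (s p₀) ((c * g p) • m (s p)) = if p = p₀ then c * g p else 0 := by
    intro p c
    rw [map_smul, dual_m]
    by_cases hp : p = p₀
    · subst hp; rw [if_pos rfl, if_pos rfl, smul_eq_mul, mul_one]
    · rw [if_neg (fun hsp => hp (hs hsp)), if_neg hp, smul_zero]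
  simp only [hterm] at h2
  rw [Finsupp.sum_ite_eq'] at h2
  by_cases hmem : p₀ ∈ F.support
  · rwa [if_pos hmem] at h2
  · rw [Finsupp.notMem_support_iff.mp hmem, zero_mul]

end SkewAux

end SkewAux

set_option maxHeartbeats 1000000 in
open SkewAux in
/-- The center of ℂ₋₁[x,y] is the subalgebra generated by x² and y². -/
theorem skew_poly_center :
    Subalgebra.center ℂ SkewPoly =
      Algebra.adjoin ℂ
        {(RingQuot.mkAlgHom ℂ SkewRel (FreeAlgebra.ι ℂ (0 : Fin 2))) ^ 2,
         (RingQuot.mkAlgHom ℂ SkewRel (FreeAlgebra.ι ℂ (1 : Fin 2))) ^ 2} := by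
  classical
  show Subalgebra.center ℂ SkewPoly = Algebra.adjoin ℂ {Xg ^ 2, Yg ^ 2}
  apply le_antisymm
  · -- center ≤ adjoin
    intro z hz
    have hz' : ∀ b : SkewPoly, b * z = z * b := Subalgebra.mem_center_iff.mp hz
    obtain ⟨F, hF⟩ := Finsupp.mem_span_range_iff_exists_finsupp.mp (span_eq_top z)
    -- relation from commuting with Yg
    have h1 : Yg * z = F.sum fun p c => (c * (-1 : ℂ) ^ p.1) • m (p.1, p.2 + 1) := by
      rw [← hF, Finsupp.mul_sum]
      apply Finsupp.sum_congr
      intro p _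
      rw [mul_smul_comm, Yg_mul_m, smul_smul]
    have h2 : z * Yg = F.sum fun p c => c • m (p.1, p.2 + 1) := by
      rw [← hF, Finsupp.sum_mul]
      apply Finsupp.sum_congr
      intro p _
      rw [smul_mul_assoc, m_mul_Yg]
    have hY0 : (F.sum fun p c => (c * ((-1 : ℂ) ^ p.1 - 1)) • m (p.1, p.2 + 1)) = 0 := by
      have e : ∀ (p : ℕ × ℕ) (c : ℂ), (c * ((-1 : ℂ) ^ p.1 - 1)) • m (p.1, p.2 + 1)
          = (c * (-1 : ℂ) ^ p.1) • m (p.1, p.2 + 1) - c • m (p.1, p.2 + 1) := by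
        intro p c
        rw [mul_sub, mul_one]
        exact sub_smul (c * (-1 : ℂ) ^ p.1) c (m (p.1, p.2 + 1))
      simp only [e]
      rw [Finsupp.sum_sub, ← h1, ← h2, hz' Yg, sub_self]
    have hA : ∀ p : ℕ × ℕ, F p * ((-1 : ℂ) ^ p.1 - 1) = 0 := by
      intro p
      refine coeff_zero_of_sum_eq F _ (fun p => (p.1, p.2 + 1)) ?_ hY0 p
      intro p q hpq
      simp only [Prod.mk.injEq] at hpq
      exact Prod.ext hpq.1 (by omega)
    -- relation from commuting with Xg
    have h3 : Xg * z = F.sum fun p c => c • m (p.1 + 1, p.2) := by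
      rw [← hF, Finsupp.mul_sum]
      apply Finsupp.sum_congr
      intro p _
      rw [mul_smul_comm, Xg_mul_m]
    have h4 : z * Xg = F.sum fun p c => (c * (-1 : ℂ) ^ p.2) • m (p.1 + 1, p.2) := by
      rw [← hF, Finsupp.sum_mul]
      apply Finsupp.sum_congr
      intro p _
      rw [smul_mul_assoc, m_mul_Xg, smul_smul]
    have hX0 : (F.sum fun p c => (c * ((-1 : ℂ) ^ p.2 - 1)) • m (p.1 + 1, p.2)) = 0 := by
      have e : ∀ (p : ℕ × ℕ) (c : ℂ), (c * ((-1 : ℂ) ^ p.2 - 1)) • m (p.1 + 1, p.2)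
          = (c * (-1 : ℂ) ^ p.2) • m (p.1 + 1, p.2) - c • m (p.1 + 1, p.2) := by
        intro p c
        rw [mul_sub, mul_one]
        exact sub_smul (c * (-1 : ℂ) ^ p.2) c (m (p.1 + 1, p.2))
      simp only [e]
      rw [Finsupp.sum_sub, ← h4, ← h3, hz' Xg, sub_self]
    have hB : ∀ p : ℕ × ℕ, F p * ((-1 : ℂ) ^ p.2 - 1) = 0 := by
      intro p
      refine coeff_zero_of_sum_eq F _ (fun p => (p.1 + 1, p.2)) ?_ hX0 p
      intro p q hpq
      simp only [Prod.mk.injEq] at hpq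
      exact Prod.ext (by omega) hpq.2
    -- conclude
    have hm : ∀ p ∈ F.support, m p ∈ Algebra.adjoin ℂ ({Xg ^ 2, Yg ^ 2} : Set SkewPoly) := by
      intro p hp
      have hFp : F p ≠ 0 := Finsupp.mem_support_iff.mp hp
      have he1 : Even p.1 := by
        by_contra h
        have hodd : Odd p.1 := Nat.odd_iff.mpr (Nat.not_even_iff.mp h)
        have h5 := hA p
        rw [hodd.neg_one_pow] at h5
        rcases mul_eq_zero.mp h5 with h6 | h6
        · exact hFp h6
        · norm_num at h6
      have he2 : Even p.2 := by
        by_contra h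
        have hodd : Odd p.2 := Nat.odd_iff.mpr (Nat.not_even_iff.mp h)
        have h5 := hB p
        rw [hodd.neg_one_pow] at h5
        rcases mul_eq_zero.mp h5 with h6 | h6
        · exact hFp h6
        · norm_num at h6
      obtain ⟨i, hi⟩ := he1
      obtain ⟨j, hj⟩ := he2
      have hmp : m p = (Xg ^ 2) ^ i * (Yg ^ 2) ^ j := by
        rw [m, hi, hj, show i + i = 2 * i by omega, show j + j = 2 * j by omega,
          pow_mul, pow_mul]
      rw [hmp]
      exact (Algebra.adjoin ℂ ({Xg ^ 2, Yg ^ 2} : Set SkewPoly)).mul_mem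
        ((Algebra.adjoin ℂ ({Xg ^ 2, Yg ^ 2} : Set SkewPoly)).pow_mem
          (Algebra.subset_adjoin (Set.mem_insert _ _)) i)
        ((Algebra.adjoin ℂ ({Xg ^ 2, Yg ^ 2} : Set SkewPoly)).pow_mem
          (Algebra.subset_adjoin (Set.mem_insert_of_mem _ rfl)) j)
    rw [← hF, Finsupp.sum]
    exact (Algebra.adjoin ℂ ({Xg ^ 2, Yg ^ 2} : Set SkewPoly)).sum_mem
      fun p hp => (Algebra.adjoin ℂ ({Xg ^ 2, Yg ^ 2} : Set SkewPoly)).smul_mem (hm p hp) _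
  · -- adjoin ≤ center
    apply Algebra.adjoin_le
    intro g hg
    rw [SetLike.mem_coe, Subalgebra.mem_center_iff]
    intro b
    rcases hg with rfl | hg
    · have hb : b ∈ Subalgebra.centralizer ℂ ({Xg ^ 2} : Set SkewPoly) := by
        refine mem_of _ ?_ ?_ b
        · rw [Subalgebra.mem_centralizer_iff]
          rintro _ rfl
          rw [← pow_succ, ← pow_succ']
        · rw [Subalgebra.mem_centralizer_iff]
          rintro _ rfl
          have := y_x_pow 2
          rw [this]
          norm_num
      exact ((Subalgebra.mem_centralizer_iff ℂ).mp hb _ rfl).symm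
    · rw [Set.mem_singleton_iff] at hg
      subst hg
      have hb : b ∈ Subalgebra.centralizer ℂ ({Yg ^ 2} : Set SkewPoly) := by
        refine mem_of _ ?_ ?_ b
        · rw [Subalgebra.mem_centralizer_iff]
          rintro _ rfl
          have := y_pow_x 2
          rw [this]
          norm_num
        · rw [Subalgebra.mem_centralizer_iff]
          rintro _ rfl
          rw [← pow_succ, ← pow_succ']
      exact ((Subalgebra.mem_centralizer_iff ℂ).mp hb _ rfl).symm
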